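/- arXiv:1012.1675 — 3 statements merged into one kernel-verified Lean document; each statement's English description precedes it below -/
import Mathlib

section
/- Let a ∈ ℝ^n and b ∈ ℝ^m. There exists an n×m row stochastic matrix D with b = aD if and only if Σ_{p=1}^n a_p = Σ_{q=1}^m b_q and Σ_{p=1}^n |a_p| ≥ Σ_{q=1}^m |b_q|. -/
open Matrix

theorem stmt_10 (n m : ℕ) (hn : 0 < n) (hm : 0 < m) (a : Fin n → ℝ) (b : Fin m → ℝ) :
    (∃ D : Matrix (Fin n) (Fin m) ℝ, (∀ p q, 0 ≤ D p q) ∧ (∀ p, ∑ q, D p q = 1) ∧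
      ∀ q, b q = ∑ p, a p * D p q) ↔
    (∑ p, a p = ∑ q, b q ∧ ∑ q, |b q| ≤ ∑ p, |a p|) := by
  constructor
  · rintro ⟨D, hpos, hrow, hb⟩
    constructor
    · calc ∑ p, a p = ∑ p, a p * ∑ q, D p q := by simp [hrow]
        _ = ∑ p, ∑ q, a p * D p q := by simp [Finset.mul_sum]
        _ = ∑ q, ∑ p, a p * D p q := Finset.sum_comm
        _ = ∑ q, b q := by simp [hb]
    · calc ∑ q, |b q| ≤ ∑ q, ∑ p, |a p| * D p q := by
            refine Finset.sum_le_sum fun q _ => ?_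
            rw [hb q]
            calc |∑ p, a p * D p q| ≤ ∑ p, |a p * D p q| := Finset.abs_sum_le_sum_abs _ _
              _ = ∑ p, |a p| * D p q := by
                  refine Finset.sum_congr rfl fun p _ => ?_
                  rw [abs_mul, abs_of_nonneg (hpos p q)]
        _ = ∑ p, |a p| * ∑ q, D p q := by rw [Finset.sum_comm]; simp [Finset.mul_sum]
        _ = ∑ p, |a p| := by simp [hrow]
  · rintro ⟨hsum, habs⟩
    classical
    set Ap := ∑ p, max (a p) 0 with hAp
    set An := ∑ p, max (-a p) 0 with hAn
    set Bp := ∑ q, max (b q) 0 with hBp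
    set Bn := ∑ q, max (-b q) 0 with hBn
    have hMa : ∀ x : ℝ, max x 0 - max (-x) 0 = x := fun x => by
      rcases le_total x 0 with h | h
      · rw [max_eq_right h, max_eq_left (neg_nonneg.mpr h)]; ring
      · rw [max_eq_left h, max_eq_right (neg_nonpos.mpr h)]; ring
    have hMb : ∀ x : ℝ, max x 0 + max (-x) 0 = |x| := fun x => by
      rcases le_total x 0 with h | h
      · rw [max_eq_right h, max_eq_left (neg_nonneg.mpr h), abs_of_nonpos h]; ring
      · rw [max_eq_left h, max_eq_right (neg_nonpos.mpr h), abs_of_nonneg h]; ring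
    have ha1 : Ap - An = ∑ p, a p := by
      rw [hAp, hAn, ← Finset.sum_sub_distrib]; simp [hMa]
    have ha2 : Ap + An = ∑ p, |a p| := by
      rw [hAp, hAn, ← Finset.sum_add_distrib]; simp [hMb]
    have hb1 : Bp - Bn = ∑ q, b q := by
      rw [hBp, hBn, ← Finset.sum_sub_distrib]; simp [hMa]
    have hb2 : Bp + Bn = ∑ q, |b q| := by
      rw [hBp, hBn, ← Finset.sum_add_distrib]; simp [hMb]
    have hApBp : Bp ≤ Ap := by linarith
    have hAnBn : Bn ≤ An := by linarith
    have hAp0 : 0 ≤ Ap := Finset.sum_nonneg fun p _ => le_max_right _ _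
    have hAn0 : 0 ≤ An := Finset.sum_nonneg fun p _ => le_max_right _ _
    have hBp0 : 0 ≤ Bp := Finset.sum_nonneg fun q _ => le_max_right _ _
    have hBn0 : 0 ≤ Bn := Finset.sum_nonneg fun q _ => le_max_right _ _
    have hbq : ∀ q, max (b q) 0 ≤ Bp := fun q =>
      Finset.single_le_sum (fun q _ => le_max_right (b q) 0) (Finset.mem_univ q)
    have hbq' : ∀ q, max (-b q) 0 ≤ Bn := fun q =>
      Finset.single_le_sum (fun q _ => le_max_right (-b q) 0) (Finset.mem_univ q)
    have hM : (0:ℝ) < m := by exact_mod_cast hm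
    set c := (Ap - Bp) / m with hc
    have hc0 : 0 ≤ c := div_nonneg (by linarith) hM.le
    have hmc : (m:ℝ) * c = Ap - Bp := by rw [hc]; field_simp [hM.ne']
    have hmc' : (m:ℝ) * c = An - Bn := by rw [hmc]; linarith
    set u : Fin m → ℝ := fun q => if 0 < Ap then (max (b q) 0 + c) / Ap else 1 / m with hu
    set v : Fin m → ℝ := fun q => if 0 < An then (max (-b q) 0 + c) / An else 1 / m with hv
    have hu0 : ∀ q, 0 ≤ u q := fun q => by
      rw [hu]; dsimp only
      split_ifs with h
      · positivity
      · positivity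
    have hv0 : ∀ q, 0 ≤ v q := fun q => by
      rw [hv]; dsimp only
      split_ifs with h
      · positivity
      · positivity
    have husum : ∑ q, u q = 1 := by
      rw [hu]; dsimp only
      split_ifs with h
      · rw [← Finset.sum_div, Finset.sum_add_distrib]
        simp only [← hBp, Finset.sum_const, Finset.card_univ, Fintype.card_fin, nsmul_eq_mul]
        rw [hmc]; field_simp; ring
      · simp [Finset.sum_const, Finset.card_univ]
        field_simp
    have hvsum : ∑ q, v q = 1 := by
      rw [hv]; dsimp only
      split_ifs with h
      · rw [← Finset.sum_div, Finset.sum_add_distrib]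
        simp only [← hBn, Finset.sum_const, Finset.card_univ, Fintype.card_fin, nsmul_eq_mul]
        rw [hmc']; field_simp; ring
      · simp [Finset.sum_const, Finset.card_univ]
        field_simp
    refine ⟨fun p q => if 0 ≤ a p then u q else v q, ?_, ?_, ?_⟩
    · intro p q
      dsimp only
      split_ifs
      · exact hu0 q
      · exact hv0 q
    · intro p
      dsimp only
      split_ifs
      · exact husum
      · exact hvsum
    · intro q
      have key : ∀ p, a p * (if 0 ≤ a p then u q else v q)
          = max (a p) 0 * u q - max (-a p) 0 * v q := by
        intro p
        split_ifs with h
        · rw [max_eq_left h, max_eq_right (neg_nonpos.mpr h)]; ring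
        · push_neg at h
          rw [max_eq_right h.le, max_eq_left (neg_nonneg.mpr h.le)]; ring
      have hsumD : ∑ p, a p * (if 0 ≤ a p then u q else v q) = Ap * u q - An * v q := by
        simp only [key]
        rw [Finset.sum_sub_distrib, ← Finset.sum_mul, ← Finset.sum_mul]
      rw [hsumD]
      rw [hu, hv]; dsimp only
      split_ifs with h1 h2 h2
      · have e1 : Ap * ((max (b q) 0 + c) / Ap) = max (b q) 0 + c := by
          field_simp
        have e2 : An * ((max (-b q) 0 + c) / An) = max (-b q) 0 + c := by
          field_simp
        rw [e1, e2]
        linarith [hMa (b q)]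
      · -- 0 < Ap, An = 0
        have hAn' : An = 0 := le_antisymm (not_lt.mp h2) hAn0
        have hBn' : Bn = 0 := le_antisymm (by linarith) hBn0
        have hbneg : max (-b q) 0 = 0 :=
          le_antisymm (by linarith [hbq' q]) (le_max_right _ _)
        have hc' : c = 0 := by
          have := hmc'; rw [hAn', hBn'] at this
          have : (m:ℝ) * c = 0 := by linarith
          exact (mul_eq_zero.mp this).resolve_left (ne_of_gt hM)
        have hbqpos : max (b q) 0 = b q := by
          have := hMa (b q); linarith
        rw [hc', hAn', hbqpos]
        have : Ap ≠ 0 := ne_of_gt h1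
        field_simp; ring
      · -- Ap = 0, 0 < An
        have hAp' : Ap = 0 := le_antisymm (not_lt.mp h1) hAp0
        have hBp' : Bp = 0 := le_antisymm (by linarith) hBp0
        have hbpos : max (b q) 0 = 0 :=
          le_antisymm (by linarith [hbq q]) (le_max_right _ _)
        have hc' : c = 0 := by
          rw [hc, hAp', hBp']; simp
        have hbqneg : max (-b q) 0 = -b q := by
          have := hMa (b q); linarith
        rw [hc', hAp', hbqneg]
        have : An ≠ 0 := ne_of_gt h2
        field_simp; ring
      · -- Ap = An = 0
        have hAp' : Ap = 0 := le_antisymm (not_lt.mp h1) hAp0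
        have hAn' : An = 0 := le_antisymm (not_lt.mp h2) hAn0
        have hBp' : Bp = 0 := le_antisymm (by linarith) hBp0
        have hBn' : Bn = 0 := le_antisymm (by linarith) hBn0
        have hbpos : max (b q) 0 = 0 :=
          le_antisymm (by linarith [hbq q]) (le_max_right _ _)
        have hbneg : max (-b q) 0 = 0 :=
          le_antisymm (by linarith [hbq' q]) (le_max_right _ _)
        have : b q = 0 := by have := hMa (b q); linarith
        rw [this, hAp', hAn']; ring
end

section
/- Let a ∈ ℝ^n, b ∈ ℝ^m, and suppose D is an n×m row stochastic matrix with b = aD. If a_p ≠ 0 for some p, then there exists a row stochastic matrix D' with b = aD' such that the p-th and q-th rows of D' are identical whenever a_p a_q > 0. -/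
open Matrix

theorem stmt_12 (n m : ℕ) (a : Fin n → ℝ) (b : Fin m → ℝ)
    (D : Matrix (Fin n) (Fin m) ℝ) (hD0 : ∀ p q, 0 ≤ D p q)
    (hDrow : ∀ p, ∑ q, D p q = 1)
    (hbD : ∀ q, b q = ∑ p, a p * D p q)
    (hp : ∃ p, a p ≠ 0) :
    ∃ D' : Matrix (Fin n) (Fin m) ℝ, (∀ p q, 0 ≤ D' p q) ∧ (∀ p, ∑ q, D' p q = 1) ∧
      (∀ q, b q = ∑ p, a p * D' p q) ∧
      ∀ p q, 0 < a p * a q → D' p = D' q := by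
  classical
  set P : Finset (Fin n) := Finset.univ.filter (fun r => 0 < a r) with hP
  set N : Finset (Fin n) := Finset.univ.filter (fun r => a r < 0) with hN
  set Sp : ℝ := ∑ r ∈ P, a r with hSp
  set Sn : ℝ := ∑ r ∈ N, a r with hSn
  have hSppos : ∀ p, 0 < a p → 0 < Sp := by
    intro p hap
    refine Finset.sum_pos' (fun r hr => le_of_lt (Finset.mem_filter.mp hr).2) ?_
    exact ⟨p, Finset.mem_filter.mpr ⟨Finset.mem_univ _, hap⟩, hap⟩
  have hSnneg : ∀ p, a p < 0 → Sn < 0 := by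
    intro p hap
    have h : 0 < ∑ r ∈ N, (-a r) := by
      refine Finset.sum_pos' (fun r hr => ?_) ?_
      · have := (Finset.mem_filter.mp hr).2; linarith
      · exact ⟨p, Finset.mem_filter.mpr ⟨Finset.mem_univ _, hap⟩, by linarith⟩
    have : 0 < -Sn := by simpa [hSn, Finset.sum_neg_distrib] using h
    linarith
  set D' : Matrix (Fin n) (Fin m) ℝ := fun p q =>
    if 0 < a p then (∑ r ∈ P, a r * D r q) / Sp
    else if a p < 0 then (∑ r ∈ N, a r * D r q) / Sn
    else D p q with hD'
  refine ⟨D', ?_, ?_, ?_, ?_⟩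
  · intro p q
    by_cases h1 : 0 < a p
    · simp only [hD', if_pos h1]
      refine div_nonneg ?_ (le_of_lt (hSppos p h1))
      refine Finset.sum_nonneg fun r hr => ?_
      exact mul_nonneg (le_of_lt (Finset.mem_filter.mp hr).2) (hD0 r q)
    · by_cases h2 : a p < 0
      · simp only [hD', if_neg h1, if_pos h2]
        rw [div_nonneg_iff]
        right
        constructor
        · refine Finset.sum_nonpos fun r hr => ?_
          exact mul_nonpos_of_nonpos_of_nonneg (le_of_lt (Finset.mem_filter.mp hr).2) (hD0 r q)
        · exact le_of_lt (hSnneg p h2)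
      · simp only [hD', if_neg h1, if_neg h2]; exact hD0 p q
  · intro p
    by_cases h1 : 0 < a p
    · simp only [hD', if_pos h1]
      rw [← Finset.sum_div, Finset.sum_comm]
      have : ∀ r ∈ P, ∑ q, a r * D r q = a r := by
        intro r _; rw [← Finset.mul_sum, hDrow r, mul_one]
      rw [Finset.sum_congr rfl this]
      exact div_self (ne_of_gt (hSppos p h1))
    · by_cases h2 : a p < 0
      · simp only [hD', if_neg h1, if_pos h2]
        rw [← Finset.sum_div, Finset.sum_comm]
        have : ∀ r ∈ N, ∑ q, a r * D r q = a r := by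
          intro r _; rw [← Finset.mul_sum, hDrow r, mul_one]
        rw [Finset.sum_congr rfl this]
        exact div_self (ne_of_lt (hSnneg p h2))
      · simp only [hD', if_neg h1, if_neg h2]; exact hDrow p
  · intro q
    rw [hbD q]
    have split : ∀ (f : Fin n → ℝ),
        ∑ p, f p = ∑ p ∈ P, f p + ∑ p ∈ N, f p
          + ∑ p ∈ Finset.univ.filter (fun r => a r = 0), f p := by
      intro f
      rw [← Finset.sum_filter_add_sum_filter_not Finset.univ (fun r => 0 < a r) f, add_assoc]
      congr 1
      rw [← Finset.sum_filter_add_sum_filter_not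
        (Finset.univ.filter (fun r => ¬ 0 < a r)) (fun r => a r < 0) f,
        Finset.filter_filter, Finset.filter_filter]
      congr 1
      · apply Finset.sum_congr _ (fun _ _ => rfl)
        apply Finset.filter_congr
        intro x _
        constructor
        · exact fun h => h.2
        · intro h; exact ⟨not_lt.mpr (le_of_lt h), h⟩
      · apply Finset.sum_congr _ (fun _ _ => rfl)
        apply Finset.filter_congr
        intro x _
        constructor
        · intro h; linarith [not_lt.mp h.1, not_lt.mp h.2]
        · intro h; constructor <;> simp [h]
    rw [split (fun p => a p * D p q), split (fun p => a p * D' p q)]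
    have hz : ∀ (M : Matrix (Fin n) (Fin m) ℝ),
        ∑ p ∈ Finset.univ.filter (fun r => a r = 0), a p * M p q = 0 := by
      intro M
      refine Finset.sum_eq_zero fun r hr => ?_
      rw [(Finset.mem_filter.mp hr).2, zero_mul]
    rw [hz D, hz D']
    congr 1
    congr 1
    · -- positive part
      by_cases hPe : P.Nonempty
      · obtain ⟨p0, hp0⟩ := hPe
        have hp0' : 0 < a p0 := (Finset.mem_filter.mp hp0).2
        have : ∀ r ∈ P, a r * D' r q = a r * ((∑ s ∈ P, a s * D s q) / Sp) := by
          intro r hr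
          simp only [hD', if_pos (Finset.mem_filter.mp hr).2]
        rw [Finset.sum_congr rfl this, ← Finset.sum_mul, ← hSp,
          mul_div_assoc' Sp _ Sp, mul_comm, mul_div_assoc,
          div_self (ne_of_gt (hSppos p0 hp0')), mul_one]
      · rw [Finset.not_nonempty_iff_eq_empty.mp hPe]; simp
    · by_cases hNe : N.Nonempty
      · obtain ⟨p0, hp0⟩ := hNe
        have hp0' : a p0 < 0 := (Finset.mem_filter.mp hp0).2
        have : ∀ r ∈ N, a r * D' r q = a r * ((∑ s ∈ N, a s * D s q) / Sn) := by
          intro r hr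
          have h2 := (Finset.mem_filter.mp hr).2
          simp only [hD', if_neg (not_lt.mpr (le_of_lt h2)), if_pos h2]
        rw [Finset.sum_congr rfl this, ← Finset.sum_mul, ← hSn,
          mul_div_assoc' Sn _ Sn, mul_comm, mul_div_assoc,
          div_self (ne_of_lt (hSnneg p0 hp0')), mul_one]
      · rw [Finset.not_nonempty_iff_eq_empty.mp hNe]; simp
  · intro p q hpq
    rcases mul_pos_iff.mp hpq with ⟨h1, h2⟩ | ⟨h1, h2⟩
    · funext x; simp only [hD', if_pos h1, if_pos h2]
    · funext x
      simp only [hD', if_neg (not_lt.mpr (le_of_lt h1)), if_pos h1,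
        if_neg (not_lt.mpr (le_of_lt h2)), if_pos h2]
end

section
/- Let a, b ∈ ℝ^n. If for every t ∈ ℝ there exists an n×n row stochastic matrix D_t with (b − t·1) = (a − t·1) D_t (where 1 = (1,…,1)), then b is majorized by a. -/
open Matrix

theorem stmt_14 (n : ℕ) (a b : Fin n → ℝ)
    (h : ∀ t : ℝ, ∃ D : Matrix (Fin n) (Fin n) ℝ,
      (∀ p q, 0 ≤ D p q) ∧ (∀ p, ∑ q, D p q = 1) ∧
      ∀ q, b q - t = ∑ p, (a p - t) * D p q) :
    (∀ s : Finset (Fin n), ∃ t : Finset (Fin n),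
      t.card = s.card ∧ ∑ i ∈ s, b i ≤ ∑ i ∈ t, a i) ∧
    ∑ i, b i = ∑ i, a i := by
  have key : ∀ (s : Finset (Fin n)) (t : ℝ),
      ∑ q ∈ s, b q - s.card * t ≤ ∑ p, max (a p - t) 0 := by
    intro s t
    obtain ⟨D, hD0, hD1, hDb⟩ := h t
    have hsum : ∑ q ∈ s, (b q - t) = ∑ p, (a p - t) * ∑ q ∈ s, D p q := by
      simp_rw [hDb, Finset.mul_sum]
      rw [Finset.sum_comm]
    rw [Finset.sum_sub_distrib, Finset.sum_const, nsmul_eq_mul] at hsum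
    rw [hsum]
    apply Finset.sum_le_sum
    intro p _
    have hc0 : 0 ≤ ∑ q ∈ s, D p q := Finset.sum_nonneg fun q _ => hD0 p q
    have hc1 : ∑ q ∈ s, D p q ≤ 1 := by
      rw [← hD1 p]
      exact Finset.sum_le_sum_of_subset_of_nonneg (Finset.subset_univ s)
        (fun q _ _ => hD0 p q)
    rcases le_or_gt 0 (a p - t) with hx | hx
    · calc (a p - t) * ∑ q ∈ s, D p q ≤ (a p - t) * 1 :=
            mul_le_mul_of_nonneg_left hc1 hx
        _ = a p - t := mul_one _
        _ ≤ max (a p - t) 0 := le_max_left _ _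
    · calc (a p - t) * ∑ q ∈ s, D p q ≤ 0 := mul_nonpos_of_nonpos_of_nonneg hx.le hc0
        _ ≤ max (a p - t) 0 := le_max_right _ _
  constructor
  · intro s
    rcases Finset.eq_empty_or_nonempty s with rfl | hs
    · exact ⟨∅, rfl, by simp⟩
    · have hne : (Finset.univ.powersetCard s.card : Finset (Finset (Fin n))).Nonempty :=
        ⟨s, by simp [Finset.mem_powersetCard_univ]⟩
      obtain ⟨T, hTmem, hTmax⟩ := Finset.exists_max_image _ (fun T => ∑ p ∈ T, a p) hne
      rw [Finset.mem_powersetCard_univ] at hTmem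
      have hTne : T.Nonempty := Finset.card_pos.mp (hTmem ▸ Finset.card_pos.mpr hs)
      obtain ⟨q0, hq0T, hq0min⟩ := Finset.exists_min_image T a hTne
      have hout : ∀ p ∉ T, a p ≤ a q0 := by
        intro p hp
        by_contra hgt
        push_neg at hgt
        have hpnot : p ∉ T.erase q0 := fun hmem => hp (Finset.mem_of_mem_erase hmem)
        have hT'card : (insert p (T.erase q0)).card = s.card := by
          rw [Finset.card_insert_of_notMem hpnot, Finset.card_erase_of_mem hq0T, hTmem]
          have := Finset.card_pos.mpr hs
          omega
        have hle := hTmax (insert p (T.erase q0))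
          (Finset.mem_powersetCard_univ.mpr hT'card)
        rw [Finset.sum_insert hpnot] at hle
        have herase : ∑ x ∈ T.erase q0, a x + a q0 = ∑ x ∈ T, a x :=
          Finset.sum_erase_add T a hq0T
        linarith
      have hsplit : ∑ p, max (a p - a q0) 0 = ∑ p ∈ T, (a p - a q0) := by
        rw [← Finset.sum_subset (Finset.subset_univ T)
          (fun p _ hp => max_eq_right (by linarith [hout p hp]))]
        exact Finset.sum_congr rfl fun p hp =>
          max_eq_left (by linarith [hq0min p hp])
      have hkey := key s (a q0)
      rw [hsplit, Finset.sum_sub_distrib, Finset.sum_const, nsmul_eq_mul, hTmem] at hkey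
      exact ⟨T, hTmem, by linarith⟩
  · obtain ⟨D, _, hD1, hDb⟩ := h 0
    have hb : ∀ q, b q = ∑ p, a p * D p q := by
      intro q
      have := hDb q
      simpa using this
    calc ∑ q, b q = ∑ q, ∑ p, a p * D p q := by simp_rw [hb]
      _ = ∑ p, a p * ∑ q, D p q := by rw [Finset.sum_comm]; simp [Finset.mul_sum]
      _ = ∑ p, a p := by simp [hD1]
end
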